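/- There exists an 𝔽₂-linear map Φ : R → B such that (i) Φ restricted to A₃ is injective with image B₆, (ii) for every d, Φ sends each element of A₃ homogeneous of dimension d to an element of B homogeneous of dimension d, and (iii) ψ_B(Φ(x)) = (Φ ⊗ Φ)(ψ_R(x)) for all x ∈ A₃. (This models the statement that H_*(Rat₃; 𝔽₂) and H_*(Bβ₆; 𝔽₂) are isomorphic as graded coalgebras, hence Rat₃, Bβ₆ and C₃ have isomorphic 𝔽₂-cohomology rings.) -/

import Mathlib

open MvPolynomial TensorProduct

/-- The field 𝔽₂. -/
abbrev F2 : Type := ZMod 2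

/-- The polynomial ring `𝔽₂[X 0, X 1, X 2, …]`, used as a model both for
`H_*(∐ₖ Ratₖ; 𝔽₂) = 𝔽₂[g, g⁻¹Qg, Q(g⁻¹Qg), …]` (the "R" model, where `X 0 = g` and
`X (i+1) = Qⁱ(g⁻¹Qg)`) and for `H_*(∐ₙ Bβₙ; 𝔽₂) = 𝔽₂[g, Qg, Q²g, …]`
(the "B" model, where `X i = Qⁱg`). -/
abbrev P : Type := MvPolynomial ℕ F2

/-- Weight of the variable `X i` in the braid model `B`: `wt(Qⁱg) = 2^i`. -/
def wB : ℕ → ℕ := fun i => 2 ^ i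

/-- Dimension of the variable `X i` in the braid model `B`: `dim(Qⁱg) = 2^i - 1`. -/
def dB : ℕ → ℕ := fun i => 2 ^ i - 1

/-- Weight of the variable `X i` in the Rat model `R`: `wt(g) = 1`,
`wt(Qⁱ(g⁻¹Qg)) = 2^i`. -/
def wR : ℕ → ℕ := fun i => match i with
  | 0 => 1
  | j + 1 => 2 ^ j

/-- Dimension of the variable `X i` in the Rat model `R`: `dim(g) = 0`,
`dim(Qⁱ(g⁻¹Qg)) = 2^(i+1) - 1`. -/
def dR : ℕ → ℕ := fun i => match i with
  | 0 => 0
  | j + 1 => 2 ^ (j + 1) - 1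

/-- The weight (resp. dimension) of a monomial with exponent vector `m`: the sum,
with multiplicity, of the weights (resp. dimensions) `w i` of its variables. -/
def mwt (w : ℕ → ℕ) (m : ℕ →₀ ℕ) : ℕ := m.sum fun i e => e * w i

/-- A polynomial is homogeneous of weight (resp. dimension) `n` with respect to the
variable-weight function `w` if every monomial in its support has weight
(resp. dimension) `n`. -/
def Homog (w : ℕ → ℕ) (n : ℕ) (x : P) : Prop := ∀ m ∈ x.support, mwt w m = n

/-- The 𝔽₂-linear span of the monomials of weight `n`. -/
noncomputable def spanWt (w : ℕ → ℕ) (n : ℕ) : Submodule F2 P :=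
  Submodule.span F2 {p : P | ∃ m : ℕ →₀ ℕ, mwt w m = n ∧ p = monomial m 1}

/-- The image `N ⊗ M` inside `P ⊗ P` of two submodules `N, M ⊆ P`. -/
noncomputable def tensorSub (N M : Submodule F2 P) : Submodule F2 (P ⊗[F2] P) :=
  Submodule.span F2 {t : P ⊗[F2] P | ∃ a ∈ N, ∃ b ∈ M, t = a ⊗ₜ[F2] b}

/-- `Q` is the Araki–Kudo operation on the Rat model: the 𝔽₂-linear map with
`Q(X 0) = X 0 · X 1`, `Q(X (i+1)) = X (i+2)`, and the Cartan formula
`Q(uv) = u²Q(v) + Q(u)v²`. -/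
def IsQ (Q : P →ₗ[F2] P) : Prop :=
  Q (X 0) = X 0 * X 1 ∧ (∀ i : ℕ, Q (X (i + 1)) = X (i + 2)) ∧
    ∀ u v : P, Q (u * v) = u ^ 2 * Q v + Q u * v ^ 2

/-- `ψ` is the coproduct on the braid model `B`: the 𝔽₂-algebra map with
`ψ(g) = g ⊗ g` and `ψ(Qⁱg) = g^(2^i) ⊗ Qⁱg + Qⁱg ⊗ g^(2^i)` for `i ≥ 1`. -/
def IsPsiB (ψ : P →ₐ[F2] P ⊗[F2] P) : Prop :=
  ψ (X 0) = X 0 ⊗ₜ[F2] X 0 ∧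
    ∀ i : ℕ, 1 ≤ i →
      ψ (X i) = ((X 0) ^ (2 ^ i)) ⊗ₜ[F2] (X i) + (X i) ⊗ₜ[F2] ((X 0) ^ (2 ^ i))

/-- `ψ` is the coproduct on the Rat model `R` (with Araki–Kudo operation `Q`):
the 𝔽₂-algebra map with `ψ(g) = g ⊗ g`, `ψ(g⁻¹Qg) = g ⊗ g⁻¹Qg + g⁻¹Qg ⊗ g`, and
`ψ(Qⁱ(g⁻¹Qg)) = g^(2^i) ⊗ Qⁱ(g⁻¹Qg) + Qⁱg ⊗ (g⁻¹Qg)^(2^i) + (g⁻¹Qg)^(2^i) ⊗ Qⁱg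
+ Qⁱ(g⁻¹Qg) ⊗ g^(2^i)` for `i ≥ 1`, where `Qⁱg = Qⁱ(X 0)`. -/
def IsPsiR (Q : P →ₗ[F2] P) (ψ : P →ₐ[F2] P ⊗[F2] P) : Prop :=
  ψ (X 0) = X 0 ⊗ₜ[F2] X 0 ∧
  ψ (X 1) = X 0 ⊗ₜ[F2] X 1 + X 1 ⊗ₜ[F2] X 0 ∧
  ∀ i : ℕ, 1 ≤ i →
    ψ (X (i + 1)) =
      ((X 0) ^ (2 ^ i)) ⊗ₜ[F2] (X (i + 1))
      + ((⇑Q)^[i] (X 0)) ⊗ₜ[F2] ((X 1) ^ (2 ^ i))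
      + ((X 1) ^ (2 ^ i)) ⊗ₜ[F2] ((⇑Q)^[i] (X 0))
      + (X (i + 1)) ⊗ₜ[F2] ((X 0) ^ (2 ^ i))

/-- `π` is the family of projections: `π s` is the 𝔽₂-linear endomorphism fixing
every monomial of dimension `s` (with respect to the variable-dimension function
`dimv`) and annihilating every monomial of other dimensions. -/
def IsPi (dimv : ℕ → ℕ) (π : ℕ → P →ₗ[F2] P) : Prop :=
  ∀ (s : ℕ) (m : ℕ →₀ ℕ) (c : F2),
    π s (monomial m c) = if mwt dimv m = s then monomial m c else 0
-- AUX START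
open Finsupp in
lemma mwt_add (w : ℕ → ℕ) (m n : ℕ →₀ ℕ) : mwt w (m + n) = mwt w m + mwt w n := by
  unfold mwt
  rw [Finsupp.sum_add_index]
  · intro i _; simp
  · intro i _ e1 e2; ring

lemma mwt_single (w : ℕ → ℕ) (i e : ℕ) : mwt w (Finsupp.single i e) = e * w i := by
  unfold mwt
  rw [Finsupp.sum_single_index]
  simp

lemma mwt_le (w : ℕ → ℕ) (m : ℕ →₀ ℕ) (i : ℕ) : m i * w i ≤ mwt w m := by
  by_cases h : i ∈ m.support
  · exact Finset.single_le_sum (f := fun j => m j * w j) (fun _ _ => Nat.zero_le _) h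
  · simp [Finsupp.notMem_support_iff.mp h]

lemma classifyR (m : ℕ →₀ ℕ) (h : mwt wR m = 3) :
    m = Finsupp.single 0 3 ∨ m = Finsupp.single 0 2 + Finsupp.single 1 1 ∨
    m = Finsupp.single 0 1 + Finsupp.single 1 2 ∨ m = Finsupp.single 1 3 ∨
    m = Finsupp.single 0 1 + Finsupp.single 2 1 ∨ m = Finsupp.single 1 1 + Finsupp.single 2 1 := by
  have h3 : ∀ j, m (j + 3) = 0 := by
    intro j
    have := mwt_le wR m (j + 3)
    rw [h] at this
    have hw : 4 ≤ wR (j + 3) := by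
      show 4 ≤ 2 ^ (j + 2)
      calc 4 = 2 ^ 2 := rfl
        _ ≤ 2 ^ (j + 2) := Nat.pow_le_pow_right (by norm_num) (by omega)
    nlinarith [Nat.zero_le (m (j+3))]
  have hm : m = Finsupp.single 0 (m 0) + Finsupp.single 1 (m 1) + Finsupp.single 2 (m 2) := by
    ext i
    match i with
    | 0 => simp
    | 1 => simp
    | 2 => simp
    | (j+3) => simp [Finsupp.single_apply, h3 j]
  have heq : m 0 + m 1 + 2 * m 2 = 3 := by
    rw [hm] at h
    simp [mwt_add, mwt_single, wR] at h
    omega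
  rw [hm]
  have h0 : m 0 ≤ 3 := by omega
  have h1 : m 1 ≤ 3 := by omega
  have h2 : m 2 ≤ 1 := by omega
  interval_cases hh0 : (m 0) <;> interval_cases hh1 : (m 1) <;> interval_cases hh2 : (m 2) <;>
    simp_all
lemma classifyB (m : ℕ →₀ ℕ) (h : mwt wB m = 6) :
    m = Finsupp.single 0 6 ∨ m = Finsupp.single 0 4 + Finsupp.single 1 1 ∨
    m = Finsupp.single 0 2 + Finsupp.single 1 2 ∨ m = Finsupp.single 1 3 ∨
    m = Finsupp.single 0 2 + Finsupp.single 2 1 ∨ m = Finsupp.single 1 1 + Finsupp.single 2 1 := by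
  have h3 : ∀ j, m (j + 3) = 0 := by
    intro j
    have := mwt_le wB m (j + 3)
    rw [h] at this
    have hw : 8 ≤ wB (j + 3) := by
      show 8 ≤ 2 ^ (j + 3)
      calc 8 = 2 ^ 3 := rfl
        _ ≤ 2 ^ (j + 3) := Nat.pow_le_pow_right (by norm_num) (by omega)
    nlinarith [Nat.zero_le (m (j+3))]
  have hm : m = Finsupp.single 0 (m 0) + Finsupp.single 1 (m 1) + Finsupp.single 2 (m 2) := by
    ext i
    match i with
    | 0 => simp
    | 1 => simp
    | 2 => simp
    | (j+3) => simp [Finsupp.single_apply, h3 j]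
  have heq : m 0 + 2 * m 1 + 4 * m 2 = 6 := by
    rw [hm] at h
    simp [mwt_add, mwt_single, wB] at h
    omega
  rw [hm]
  have h0 : m 0 ≤ 6 := by omega
  have h1 : m 1 ≤ 3 := by omega
  have h2 : m 2 ≤ 1 := by omega
  interval_cases hh0 : (m 0) <;> interval_cases hh1 : (m 1) <;> interval_cases hh2 : (m 2) <;>
    simp_all
noncomputable section

def eA : Fin 6 → (ℕ →₀ ℕ) :=
  ![Finsupp.single 0 3, Finsupp.single 0 2 + Finsupp.single 1 1,
    Finsupp.single 0 1 + Finsupp.single 1 2, Finsupp.single 1 3,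
    Finsupp.single 0 1 + Finsupp.single 2 1, Finsupp.single 1 1 + Finsupp.single 2 1]

def eB : Fin 6 → (ℕ →₀ ℕ) :=
  ![Finsupp.single 0 6, Finsupp.single 0 4 + Finsupp.single 1 1,
    Finsupp.single 0 2 + Finsupp.single 1 2, Finsupp.single 1 3,
    Finsupp.single 0 2 + Finsupp.single 2 1, Finsupp.single 1 1 + Finsupp.single 2 1]

lemma eA_0 : eA 0 = Finsupp.single 0 3 := rfl
lemma eB_0 : eB 0 = Finsupp.single 0 6 := rfl
lemma eA_1 : eA 1 = Finsupp.single 0 2 + Finsupp.single 1 1 := rfl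
lemma eB_1 : eB 1 = Finsupp.single 0 4 + Finsupp.single 1 1 := rfl
lemma eA_2 : eA 2 = Finsupp.single 0 1 + Finsupp.single 1 2 := rfl
lemma eB_2 : eB 2 = Finsupp.single 0 2 + Finsupp.single 1 2 := rfl
lemma eA_3 : eA 3 = Finsupp.single 1 3 := rfl
lemma eB_3 : eB 3 = Finsupp.single 1 3 := rfl
lemma eA_4 : eA 4 = Finsupp.single 0 1 + Finsupp.single 2 1 := rfl
lemma eB_4 : eB 4 = Finsupp.single 0 2 + Finsupp.single 2 1 := rfl
lemma eA_5 : eA 5 = Finsupp.single 1 1 + Finsupp.single 2 1 := rfl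
lemma eB_5 : eB 5 = Finsupp.single 1 1 + Finsupp.single 2 1 := rfl

def vA : Fin 6 → P := fun i => monomial (eA i) 1
def vB : Fin 6 → P := fun i => monomial (eB i) 1

lemma spanA : spanWt wR 3 = Submodule.span F2 (Set.range vA) := by
  unfold spanWt
  congr 1
  ext p
  constructor
  · rintro ⟨m, hm, rfl⟩
    rcases classifyR m hm with h|h|h|h|h|h
    exacts [⟨0, by simp [vA, eA, h]⟩, ⟨1, by simp [vA, eA, h]⟩, ⟨2, by simp [vA, eA, h]⟩,
      ⟨3, by simp [vA, eA, h]⟩, ⟨4, by simp [vA, eA, h]⟩, ⟨5, by simp [vA, eA_5, h]⟩]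
  · rintro ⟨i, rfl⟩
    refine ⟨eA i, ?_, rfl⟩
    fin_cases i <;> simp [eA_0, eA_1, eA_2, eA_3, eA_4, eA_5, mwt_add, mwt_single, wR]

lemma spanB : spanWt wB 6 = Submodule.span F2 (Set.range vB) := by
  unfold spanWt
  congr 1
  ext p
  constructor
  · rintro ⟨m, hm, rfl⟩
    rcases classifyB m hm with h|h|h|h|h|h
    exacts [⟨0, by simp [vB, eB, h]⟩, ⟨1, by simp [vB, eB, h]⟩, ⟨2, by simp [vB, eB, h]⟩,
      ⟨3, by simp [vB, eB, h]⟩, ⟨4, by simp [vB, eB, h]⟩, ⟨5, by simp [vB, eB_5, h]⟩]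
  · rintro ⟨i, rfl⟩
    refine ⟨eB i, ?_, rfl⟩
    fin_cases i <;> simp [eB_0, eB_1, eB_2, eB_3, eB_4, eB_5, mwt_add, mwt_single, wB]

lemma memA {x : P} : x ∈ spanWt wR 3 ↔ ∃ c : Fin 6 → F2, ∑ i, c i • vA i = x := by
  rw [spanA]; exact Submodule.mem_span_range_iff_exists_fun F2

lemma memB {x : P} : x ∈ spanWt wB 6 ↔ ∃ c : Fin 6 → F2, ∑ i, c i • vB i = x := by
  rw [spanB]; exact Submodule.mem_span_range_iff_exists_fun F2

end
noncomputable section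

def nuA : Fin 6 → ℕ × ℕ := ![(3,0),(2,1),(1,2),(0,3),(1,0),(0,1)]
def nuB : Fin 6 → ℕ × ℕ := ![(6,0),(4,1),(2,2),(0,3),(2,0),(0,1)]

lemma nuA_inj : ∀ i j : Fin 6, nuA i = nuA j → i = j := by decide
lemma nuB_inj : ∀ i j : Fin 6, nuB i = nuB j → i = j := by decide

lemma eA_nu : ∀ i, (eA i 0, eA i 1) = nuA i := by
  intro i
  fin_cases i <;>
    simp [eA_0, eA_1, eA_2, eA_3, eA_4, eA_5, nuA, Finsupp.single_apply] <;> rfl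

lemma eB_nu : ∀ i, (eB i 0, eB i 1) = nuB i := by
  intro i
  fin_cases i <;>
    simp [eB_0, eB_1, eB_2, eB_3, eB_4, eB_5, nuB, Finsupp.single_apply] <;> rfl

lemma eA_inj : Function.Injective eA := by
  intro i j h
  exact nuA_inj i j (by rw [← eA_nu i, ← eA_nu j, h])

lemma eB_inj : Function.Injective eB := by
  intro i j h
  exact nuB_inj i j (by rw [← eB_nu i, ← eB_nu j, h])

open scoped Classical in
def fPhi : (ℕ →₀ ℕ) → P := fun m =>
  if m = eA 0 then vB 0 else if m = eA 1 then vB 1 else if m = eA 2 then vB 2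
  else if m = eA 3 then vB 3 else if m = eA 4 then vB 3 + vB 4
  else if m = eA 5 then vB 5 else 0

def Phi : P →ₗ[F2] P := (basisMonomials ℕ F2).constr F2 fPhi

lemma Phi_mono (m : ℕ →₀ ℕ) : Phi (monomial m 1) = fPhi m := by
  have : (monomial m (1:F2)) = basisMonomials ℕ F2 m := by
    rw [coe_basisMonomials]
  rw [this, Phi, Module.Basis.constr_basis]

def wImg : Fin 6 → P := ![vB 0, vB 1, vB 2, vB 3, vB 3 + vB 4, vB 5]

lemma Phi_vA (i : Fin 6) : Phi (vA i) = wImg i := by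
  rw [show vA i = monomial (eA i) 1 from rfl, Phi_mono]
  fin_cases i <;> simp [fPhi, wImg, eA_inj.eq_iff] <;> rfl

end
noncomputable section

lemma F2_add_self (a : F2) : a + a = 0 := by
  have : ∀ b : F2, b + b = 0 := by decide
  exact this a

def Mc (c : Fin 6 → F2) : Fin 6 → F2 := fun i => if i = 3 then c 3 + c 4 else c i

lemma Mc_invol (c : Fin 6 → F2) : Mc (Mc c) = c := by
  funext i
  by_cases h : i = 3 <;> simp [Mc, h]
  rw [add_assoc, F2_add_self, add_zero]

lemma Phi_LA (c : Fin 6 → F2) : Phi (∑ i, c i • vA i) = ∑ i, Mc c i • vB i := by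
  rw [map_sum]
  simp only [map_smul, Phi_vA]
  rw [Fin.sum_univ_six, Fin.sum_univ_six]
  have w0 : wImg 0 = vB 0 := rfl
  have w1 : wImg 1 = vB 1 := rfl
  have w2 : wImg 2 = vB 2 := rfl
  have w3 : wImg 3 = vB 3 := rfl
  have w4 : wImg 4 = vB 3 + vB 4 := rfl
  have w5 : wImg 5 = vB 5 := rfl
  have m0 : Mc c 0 = c 0 := rfl
  have m1 : Mc c 1 = c 1 := rfl
  have m2 : Mc c 2 = c 2 := rfl
  have m3 : Mc c 3 = c 3 + c 4 := rfl
  have m4 : Mc c 4 = c 4 := rfl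
  have m5 : Mc c 5 = c 5 := rfl
  rw [w0, w1, w2, w3, w4, w5, m0, m1, m2, m3, m4, m5]
  module

lemma vB_indep : LinearIndependent F2 vB := by
  have h : ⇑(basisMonomials ℕ F2) ∘ eB = vB := by
    funext i
    rw [Function.comp_apply, coe_basisMonomials]
    rfl
  rw [← h]
  exact (basisMonomials ℕ F2).linearIndependent.comp eB eB_inj

lemma sumB_inj (c c' : Fin 6 → F2) (h : ∑ i, c i • vB i = ∑ i, c' i • vB i) : c = c' := by
  have h0 : ∑ i, (c i - c' i) • vB i = 0 := by
    simp only [sub_smul, Finset.sum_sub_distrib, h, sub_self]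
  funext i
  have := Fintype.linearIndependent_iff.mp vB_indep _ h0 i
  exact sub_eq_zero.mp this

end
noncomputable section

lemma coeff_sumA (c : Fin 6 → F2) (j : Fin 6) :
    coeff (eA j) (∑ i, c i • vA i) = c j := by
  rw [coeff_sum]
  simp [vA, coeff_smul, coeff_monomial, eA_inj.eq_iff]

lemma coeff_sumB (c : Fin 6 → F2) (j : Fin 6) :
    coeff (eB j) (∑ i, c i • vB i) = c j := by
  rw [coeff_sum]
  simp [vB, coeff_smul, coeff_monomial, eB_inj.eq_iff]

lemma dimsA : ∀ i : Fin 6, mwt dR (eA i) = ![0,1,2,3,3,4] i := by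
  intro i
  fin_cases i <;>
    simp [eA_0, eA_1, eA_2, eA_3, eA_4, eA_5, mwt_add, mwt_single, dR] <;> rfl

lemma dimsB : ∀ i : Fin 6, mwt dB (eB i) = ![0,1,2,3,3,4] i := by
  intro i
  fin_cases i <;>
    simp [eB_0, eB_1, eB_2, eB_3, eB_4, eB_5, mwt_add, mwt_single, dB] <;> rfl

lemma homog_transfer (c : Fin 6 → F2) (d : ℕ)
    (h : Homog dR d (∑ i, c i • vA i)) : Homog dB d (∑ i, Mc c i • vB i) := by
  have hA : ∀ i, c i ≠ 0 → mwt dR (eA i) = d := by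
    intro i hi
    exact h (eA i) (mem_support_iff.mpr (by rw [coeff_sumA]; exact hi))
  intro m hm
  rw [mem_support_iff] at hm
  have hcoeff : coeff m (∑ i, Mc c i • vB i) = ∑ i, if eB i = m then Mc c i else 0 := by
    rw [coeff_sum]
    simp [vB, coeff_smul, coeff_monomial, mul_ite]
  obtain ⟨i, him, hci⟩ : ∃ i, eB i = m ∧ Mc c i ≠ 0 := by
    by_contra hall
    push_neg at hall
    apply hm
    rw [hcoeff]
    refine Finset.sum_eq_zero fun i _ => ?_
    split_ifs with h'
    · exact hall i h'
    · rfl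
  rw [← him, dimsB i]
  have key : ∀ j : Fin 6, c j ≠ 0 → (![0,1,2,3,3,4] : Fin 6 → ℕ) j = d := by
    intro j hj; rw [← dimsA j]; exact hA j hj
  fin_cases i
  · exact key 0 (by simpa [Mc] using hci)
  · exact key 1 (by simpa [Mc] using hci)
  · exact key 2 (by simpa [Mc] using hci)
  · -- i = 3 : Mc c 3 = c 3 + c 4
    have h34 : c 3 + c 4 ≠ 0 := by simpa [Mc] using hci
    rcases eq_or_ne (c 3) 0 with h3 | h3
    · have h4 : c 4 ≠ 0 := by
        intro h4; apply h34; rw [h3, h4, add_zero]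
      have := key 4 h4
      simpa using this
    · have := key 3 h3
      simpa using this
  · have := key 4 (by simpa [Mc] using hci)
    simpa using this
  · have := key 5 (by simpa [Mc] using hci)
    simpa using this

end
noncomputable section

open Algebra.TensorProduct

lemma tt_add_self (t : P ⊗[F2] P) : t + t = 0 := by
  rw [← two_smul F2 t, show (2 : F2) = 0 by decide, zero_smul]

lemma two_mul_eq_zero (t : P ⊗[F2] P) : 2 * t = 0 := by
  rw [two_mul, tt_add_self]

lemma mul_two_eq_zero (t : P ⊗[F2] P) : t * 2 = 0 := by
  rw [mul_comm, two_mul_eq_zero]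

lemma sq_add' (a b : P ⊗[F2] P) : (a + b) ^ 2 = a ^ 2 + b ^ 2 := by
  rw [add_sq]
  rw [show 2 * a * b = a * b + a * b by ring, tt_add_self]
  ring

lemma cube_add' (a b : P ⊗[F2] P) :
    (a + b) ^ 3 = a ^ 3 + a ^ 2 * b + a * b ^ 2 + b ^ 3 := by
  rw [pow_succ, sq_add']
  ring

-- X-forms of the basis monomials
lemma vA_0 : vA 0 = X 0 ^ 3 := by simp [vA, eA_0, X_pow_eq_monomial]
lemma vA_1 : vA 1 = X 0 ^ 2 * X 1 := by
  simp [vA, eA_1, X_pow_eq_monomial, MvPolynomial.X, monomial_mul, monomial_pow, Finsupp.smul_single]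
lemma vA_2 : vA 2 = X 0 * X 1 ^ 2 := by
  simp [vA, eA_2, X_pow_eq_monomial, MvPolynomial.X, monomial_mul, monomial_pow, Finsupp.smul_single, add_comm]
lemma vA_3 : vA 3 = X 1 ^ 3 := by simp [vA, eA_3, X_pow_eq_monomial]
lemma vA_4 : vA 4 = X 0 * X 2 := by
  simp [vA, eA_4, MvPolynomial.X, monomial_mul]
lemma vA_5 : vA 5 = X 1 * X 2 := by
  simp [vA, eA_5, MvPolynomial.X, monomial_mul]

lemma vB_0 : vB 0 = X 0 ^ 6 := by simp [vB, eB_0, X_pow_eq_monomial]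
lemma vB_1 : vB 1 = X 0 ^ 4 * X 1 := by
  simp [vB, eB_1, X_pow_eq_monomial, MvPolynomial.X, monomial_mul, monomial_pow, Finsupp.smul_single]
lemma vB_2 : vB 2 = X 0 ^ 2 * X 1 ^ 2 := by
  simp [vB, eB_2, X_pow_eq_monomial, monomial_mul]
lemma vB_3 : vB 3 = X 1 ^ 3 := by simp [vB, eB_3, X_pow_eq_monomial]
lemma vB_4 : vB 4 = X 0 ^ 2 * X 2 := by
  simp [vB, eB_4, X_pow_eq_monomial, MvPolynomial.X, monomial_mul, monomial_pow, Finsupp.smul_single]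
lemma vB_5 : vB 5 = X 1 * X 2 := by
  simp [vB, eB_5, MvPolynomial.X, monomial_mul]


-- Phi in X-form
lemma p0 : Phi (X 0 ^ 3) = X 0 ^ 6 := by
  conv_lhs => rw [← vA_0]
  rw [Phi_vA, show wImg 0 = vB 0 from rfl, vB_0]
lemma p1 : Phi (X 0 ^ 2 * X 1) = X 0 ^ 4 * X 1 := by
  conv_lhs => rw [← vA_1]
  rw [Phi_vA, show wImg 1 = vB 1 from rfl, vB_1]
lemma p2 : Phi (X 0 * X 1 ^ 2) = X 0 ^ 2 * X 1 ^ 2 := by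
  conv_lhs => rw [← vA_2]
  rw [Phi_vA, show wImg 2 = vB 2 from rfl, vB_2]
lemma p3 : Phi (X 1 ^ 3) = X 1 ^ 3 := by
  conv_lhs => rw [← vA_3]
  rw [Phi_vA, show wImg 3 = vB 3 from rfl, vB_3]
lemma p4 : Phi (X 0 * X 2) = X 1 ^ 3 + X 0 ^ 2 * X 2 := by
  conv_lhs => rw [← vA_4]
  rw [Phi_vA, show wImg 4 = vB 3 + vB 4 from rfl, vB_3, vB_4]
lemma p5 : Phi (X 1 * X 2) = X 1 * X 2 := by
  conv_lhs => rw [← vA_5]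
  rw [Phi_vA, show wImg 5 = vB 5 from rfl, vB_5]

end
noncomputable section
open Algebra.TensorProduct

variable {Q : P →ₗ[F2] P} {ψR ψB : P →ₐ[F2] P ⊗[F2] P}

lemma psiB_X1 (hψB : IsPsiB ψB) :
    ψB (X 1) = (X 0 ^ 2) ⊗ₜ[F2] X 1 + X 1 ⊗ₜ[F2] (X 0 ^ 2) := by
  have h := hψB.2 1 le_rfl
  norm_num at h
  exact h

lemma psiB_X2 (hψB : IsPsiB ψB) :
    ψB (X 2) = (X 0 ^ 4) ⊗ₜ[F2] X 2 + X 2 ⊗ₜ[F2] (X 0 ^ 4) := by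
  have h := hψB.2 2 (by norm_num)
  norm_num at h
  exact h

lemma psiR_X2 (hQ : IsQ Q) (hψR : IsPsiR Q ψR) :
    ψR (X 2) = (X 0 ^ 2) ⊗ₜ[F2] X 2 + (X 0 * X 1) ⊗ₜ[F2] (X 1 ^ 2)
      + (X 1 ^ 2) ⊗ₜ[F2] (X 0 * X 1) + X 2 ⊗ₜ[F2] (X 0 ^ 2) := by
  have h := hψR.2.2 1 le_rfl
  norm_num [hQ.1] at h
  exact h

lemma gen0 (hψR : IsPsiR Q ψR) (hψB : IsPsiB ψB) :
    ψB (Phi (vA 0)) = TensorProduct.map Phi Phi (ψR (vA 0)) := by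
  simp only [vA_0, p0, map_pow, hψB.1, hψR.1, tmul_pow, TensorProduct.map_tmul]

lemma gen1 (hψR : IsPsiR Q ψR) (hψB : IsPsiB ψB) :
    ψB (Phi (vA 1)) = TensorProduct.map Phi Phi (ψR (vA 1)) := by
  have q0 := p0; have q1 := p1; have q2 := p2
  have q3 := p3; have q4 := p4; have q5 := p5
  simp only [vA_1, q1, map_mul, map_pow, map_add, hψB.1, hψR.1, psiB_X1 hψB, hψR.2.1,
    mul_add, add_mul, tmul_mul_tmul, tmul_pow, TensorProduct.map_tmul]
  ring_nf
  try ring_nf at q0 q1 q2 q3 q4 q5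
  try simp only [q0, q1, q2, q3, q4, q5]
  try simp only [TensorProduct.tmul_add, TensorProduct.add_tmul]
  try ring_nf
  try simp only [two_mul_eq_zero, mul_two_eq_zero, add_zero, zero_add]
  try ring_nf
  try abel
lemma gen2 (hQ : IsQ Q) (hψR : IsPsiR Q ψR) (hψB : IsPsiB ψB) :
    ψB (Phi (vA 2)) = TensorProduct.map Phi Phi (ψR (vA 2)) := by
  have q0 := p0; have q1 := p1; have q2 := p2
  have q3 := p3; have q4 := p4; have q5 := p5
  simp only [vA_2, q2, map_mul, map_pow, map_add, hψB.1, hψR.1, psiB_X1 hψB, psiB_X2 hψB,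
    hψR.2.1, psiR_X2 hQ hψR, sq_add', cube_add', mul_add, add_mul, tmul_mul_tmul, tmul_pow,
    TensorProduct.map_tmul]
  ring_nf
  try ring_nf at q0 q1 q2 q3 q4 q5
  try simp only [q0, q1, q2, q3, q4, q5]
  try simp only [TensorProduct.tmul_add, TensorProduct.add_tmul]
  try ring_nf
  try simp only [two_mul_eq_zero, mul_two_eq_zero, add_zero, zero_add]
  try ring_nf
  try abel

lemma gen3 (hQ : IsQ Q) (hψR : IsPsiR Q ψR) (hψB : IsPsiB ψB) :
    ψB (Phi (vA 3)) = TensorProduct.map Phi Phi (ψR (vA 3)) := by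
  have q0 := p0; have q1 := p1; have q2 := p2
  have q3 := p3; have q4 := p4; have q5 := p5
  simp only [vA_3, q3, map_mul, map_pow, map_add, hψB.1, hψR.1, psiB_X1 hψB, psiB_X2 hψB,
    hψR.2.1, psiR_X2 hQ hψR, sq_add', cube_add', mul_add, add_mul, tmul_mul_tmul, tmul_pow,
    TensorProduct.map_tmul]
  ring_nf
  try ring_nf at q0 q1 q2 q3 q4 q5
  try simp only [q0, q1, q2, q3, q4, q5]
  try simp only [TensorProduct.tmul_add, TensorProduct.add_tmul]
  try ring_nf
  try simp only [two_mul_eq_zero, mul_two_eq_zero, add_zero, zero_add]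
  try ring_nf
  try abel

lemma gen4 (hQ : IsQ Q) (hψR : IsPsiR Q ψR) (hψB : IsPsiB ψB) :
    ψB (Phi (vA 4)) = TensorProduct.map Phi Phi (ψR (vA 4)) := by
  have q0 := p0; have q1 := p1; have q2 := p2
  have q3 := p3; have q4 := p4; have q5 := p5
  simp only [vA_4, q4, map_mul, map_pow, map_add, hψB.1, hψR.1, psiB_X1 hψB, psiB_X2 hψB,
    hψR.2.1, psiR_X2 hQ hψR, sq_add', cube_add', mul_add, add_mul, tmul_mul_tmul, tmul_pow,
    TensorProduct.map_tmul]
  ring_nf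
  try ring_nf at q0 q1 q2 q3 q4 q5
  try simp only [q0, q1, q2, q3, q4, q5]
  try simp only [TensorProduct.tmul_add, TensorProduct.add_tmul]
  try ring_nf
  try simp only [two_mul_eq_zero, mul_two_eq_zero, add_zero, zero_add]
  try ring_nf
  try abel

lemma gen5 (hQ : IsQ Q) (hψR : IsPsiR Q ψR) (hψB : IsPsiB ψB) :
    ψB (Phi (vA 5)) = TensorProduct.map Phi Phi (ψR (vA 5)) := by
  have q0 := p0; have q1 := p1; have q2 := p2
  have q3 := p3; have q4 := p4; have q5 := p5
  simp only [vA_5, q5, map_mul, map_pow, map_add, hψB.1, hψR.1, psiB_X1 hψB, psiB_X2 hψB,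
    hψR.2.1, psiR_X2 hQ hψR, sq_add', cube_add', mul_add, add_mul, tmul_mul_tmul, tmul_pow,
    TensorProduct.map_tmul]
  ring_nf
  try ring_nf at q0 q1 q2 q3 q4 q5
  try simp only [q0, q1, q2, q3, q4, q5]
  try simp only [TensorProduct.tmul_add, TensorProduct.add_tmul]
  try ring_nf
  try simp only [two_mul_eq_zero, mul_two_eq_zero, add_zero, zero_add]
  try ring_nf
  try abel

end

lemma gen_all {Q : P →ₗ[F2] P} {ψR ψB : P →ₐ[F2] P ⊗[F2] P}
    (hQ : IsQ Q) (hψR : IsPsiR Q ψR) (hψB : IsPsiB ψB) (i : Fin 6) :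
    ψB (Phi (vA i)) = TensorProduct.map Phi Phi (ψR (vA i)) := by
  fin_cases i
  exacts [gen0 hψR hψB, gen1 hψR hψB, gen2 hQ hψR hψB, gen3 hQ hψR hψB,
    gen4 hQ hψR hψB, gen5 hQ hψR hψB]



/-- There exists an 𝔽₂-linear map `Φ : R → B` that (i) restricts
to an injection of `A₃` with image `B₆`, (ii) sends elements of `A₃` homogeneous of
dimension `d` to elements homogeneous of dimension `d`, and (iii) satisfies
`ψ_B(Φ(x)) = (Φ ⊗ Φ)(ψ_R(x))` on `A₃`.  (So `H_*(Rat₃; 𝔽₂) ≅ H_*(Bβ₆; 𝔽₂)` as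
graded coalgebras.) -/
theorem rat3_iso_braid6
    (Q : P →ₗ[F2] P) (hQ : IsQ Q)
    (ψR : P →ₐ[F2] P ⊗[F2] P) (hψR : IsPsiR Q ψR)
    (ψB : P →ₐ[F2] P ⊗[F2] P) (hψB : IsPsiB ψB) :
    ∃ Φ : P →ₗ[F2] P,
      (Set.InjOn ⇑Φ (spanWt wR 3 : Set P) ∧
        ⇑Φ '' (spanWt wR 3 : Set P) = (spanWt wB 6 : Set P)) ∧
      (∀ (d : ℕ), ∀ x ∈ spanWt wR 3, Homog dR d x → Homog dB d (Φ x)) ∧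
      (∀ x ∈ spanWt wR 3, ψB (Φ x) = TensorProduct.map Φ Φ (ψR x)) := by
  refine ⟨Phi, ⟨?_, ?_⟩, ?_, ?_⟩
  · intro x hx y hy hxy
    obtain ⟨c, rfl⟩ := memA.mp hx
    obtain ⟨c', rfl⟩ := memA.mp hy
    rw [Phi_LA, Phi_LA] at hxy
    have h1 := sumB_inj _ _ hxy
    have hc : c = c' := by
      have h2 := congrArg Mc h1
      rwa [Mc_invol, Mc_invol] at h2
    rw [hc]
  · ext y
    constructor
    · rintro ⟨x, hx, rfl⟩
      obtain ⟨c, rfl⟩ := memA.mp hx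
      rw [Phi_LA]
      exact memB.mpr ⟨Mc c, rfl⟩
    · intro hy
      obtain ⟨c, rfl⟩ := memB.mp hy
      refine ⟨∑ i, Mc c i • vA i, memA.mpr ⟨Mc c, rfl⟩, ?_⟩
      rw [Phi_LA, Mc_invol]
  · intro d x hx hH
    obtain ⟨c, rfl⟩ := memA.mp hx
    rw [Phi_LA]
    exact homog_transfer c d hH
  · intro x hx
    obtain ⟨c, rfl⟩ := memA.mp hx
    simp only [map_sum, map_smul]
    exact Finset.sum_congr rfl fun i _ => by rw [gen_all hQ hψR hψB i]
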